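/- Let (X,d) be a metric space. The following are equivalent: (a) (X,d) is complete; (b) each continuous TB-regular function from (X,d) to any other metric space (Y,ρ) is Cauchy continuous; (c) each real-valued continuous TB-regular function on (X,d) is Cauchy continuous. -/

import Mathlib

universe u v

/-- `f` is TB-regular if it maps totally bounded sets to totally bounded sets. -/
def TBRegular {X : Type u} {Y : Type v} [MetricSpace X] [MetricSpace Y] (f : X → Y) : Prop :=
  ∀ A : Set X, TotallyBounded A → TotallyBounded (f '' A)

/-- `f` is Cauchy continuous if it maps Cauchy sequences to Cauchy sequences. -/
def CauchyCont {X : Type u} {Y : Type v} [MetricSpace X] [MetricSpace Y] (f : X → Y) : Prop :=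
  ∀ u : ℕ → X, CauchySeq u → CauchySeq (f ∘ u)

open Filter Metric Topology

/-- The range of any subsequence of a Cauchy sequence with no limit is closed. -/
lemma aux_closed_range {X : Type u} [MetricSpace X] {u : ℕ → X} (hu : CauchySeq u)
    (hdiv : ∀ a, ¬ Tendsto u atTop (𝓝 a)) {ψ : ℕ → ℕ} (hψ : StrictMono ψ) :
    IsClosed (Set.range (u ∘ ψ)) := by
  set w : ℕ → X := u ∘ ψ with hw
  rw [← closure_subset_iff_isClosed]
  intro z hz
  by_contra hzr
  -- every point of the range is at positive distance from `z`
  have hpos : ∀ k, 0 < dist (w k) z := by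
    intro k
    rw [dist_pos]
    exact fun h => hzr (h ▸ Set.mem_range_self k)
  -- key claim: arbitrarily late terms come arbitrarily close to `z`
  have key : ∀ N : ℕ, ∀ ε : ℝ, 0 < ε → ∃ k, N < k ∧ dist (w k) z < ε := by
    intro N ε hε
    have hne : (Finset.range (N + 1)).Nonempty := ⟨0, by simp⟩
    set δ : ℝ := (Finset.range (N + 1)).inf' hne (fun k => dist (w k) z) with hδ
    have hδpos : 0 < δ := by
      rw [hδ, Finset.lt_inf'_iff]
      exact fun k _ => hpos k
    obtain ⟨y, hy, hyz⟩ := Metric.mem_closure_iff.1 hz (min ε δ) (lt_min hε hδpos)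
    obtain ⟨k, rfl⟩ := hy
    refine ⟨k, ?_, ?_⟩
    · by_contra hk
      push_neg at hk
      have : δ ≤ dist (w k) z :=
        Finset.inf'_le _ (Finset.mem_range.2 (Nat.lt_succ_of_le hk))
      rw [dist_comm z (w k)] at hyz
      have := lt_of_lt_of_le (lt_of_lt_of_le hyz (min_le_right _ _)) this
      exact lt_irrefl _ this
    · rw [dist_comm] at hyz
      exact lt_of_lt_of_le hyz (min_le_left _ _)
  -- construct a subsequence converging to `z`
  have hex : ∀ j : ℕ, ∀ N : ℕ, ∃ k, N < k ∧ dist (w k) z < 1 / ((j : ℝ) + 1) := by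
    intro j N
    exact key N _ (by positivity)
  choose g hg1 hg2 using hex
  let k : ℕ → ℕ := fun j => Nat.rec (g 0 0) (fun j kj => g (j + 1) kj) j
  have hkmono : StrictMono k := strictMono_nat_of_lt_succ fun j => hg1 (j + 1) (k j)
  have hkdist : ∀ j, dist (w (k j)) z < 1 / ((j : ℝ) + 1) := by
    intro j
    cases j with
    | zero => exact hg2 0 0
    | succ j => exact hg2 (j + 1) (k j)
  have htend : Tendsto (w ∘ k) atTop (𝓝 z) := by
    rw [Metric.tendsto_atTop]
    intro ε hε
    obtain ⟨N, hN⟩ := exists_nat_one_div_lt hε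
    refine ⟨N, fun n hn => ?_⟩
    calc dist (w (k n)) z < 1 / ((n : ℝ) + 1) := hkdist n
      _ ≤ 1 / ((N : ℝ) + 1) := by
          apply one_div_le_one_div_of_le (by positivity)
          have := (Nat.cast_le (α := ℝ)).2 hn
          linarith
      _ < ε := hN
  have : Tendsto u atTop (𝓝 z) :=
    tendsto_nhds_of_cauchySeq_of_subseq hu (hψ.comp hkmono).tendsto_atTop htend
  exact hdiv z this

theorem complete_iff_continuous_tbRegular_cauchyCont {X : Type u} [MetricSpace X] :
    List.TFAE
      [CompleteSpace X,
       ∀ (Y : Type v) [MetricSpace Y] (f : X → Y), Continuous f → TBRegular f → CauchyCont f,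
       ∀ f : X → ℝ, Continuous f → TBRegular f → CauchyCont f] := by
  tfae_have 1 → 2 := by
    intro h Y _ f hf _ u hu
    obtain ⟨a, ha⟩ := cauchySeq_tendsto_of_complete hu
    exact ((hf.tendsto a).comp ha).cauchySeq
  tfae_have 2 → 3 := by
    intro h f hfc hftb u hu
    have hup : Isometry (ULift.up : ℝ → ULift.{v} ℝ) := fun x y => rfl
    have hdown : Isometry (ULift.down : ULift.{v} ℝ → ℝ) := fun x y => rfl
    have h2 : CauchySeq ((fun x => ULift.up.{v} (f x)) ∘ u) := by
      apply h (ULift.{v} ℝ) (fun x => ULift.up (f x))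
        (continuous_uliftUp.comp hfc) _ u hu
      intro A hA
      have : (fun x => ULift.up.{v} (f x)) '' A = ULift.up '' (f '' A) := by
        rw [Set.image_image]
      rw [this]
      exact (hftb A hA).image hup.uniformContinuous
    have : f ∘ u = ULift.down ∘ ((fun x => ULift.up.{v} (f x)) ∘ u) := rfl
    rw [this]
    exact hdown.uniformContinuous.comp_cauchySeq h2
  tfae_have 3 → 1 := by
    intro h3
    apply Metric.complete_of_cauchySeq_tendsto
    intro u hu
    by_contra hdiv
    push_neg at hdiv
    -- the limit of `u` in the completion
    have hcu : CauchySeq (fun n => (u n : UniformSpace.Completion X)) :=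
      (UniformSpace.Completion.coe_isometry.uniformContinuous).comp_cauchySeq hu
    obtain ⟨p, hp⟩ := cauchySeq_tendsto_of_complete hcu
    set f : X → ℝ := fun x => dist (x : UniformSpace.Completion X) p with hfdef
    have hfpos : ∀ x, 0 < f x := by
      intro x
      rw [hfdef]
      rw [dist_pos]
      intro hxp
      apply hdiv x
      have h2 : Tendsto (fun n => dist ((u n : UniformSpace.Completion X))
          ((x : UniformSpace.Completion X))) atTop (𝓝 0) := by
        rw [hxp]
        exact tendsto_iff_dist_tendsto_zero.1 hp
      rw [tendsto_iff_dist_tendsto_zero]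
      simpa [UniformSpace.Completion.dist_eq] using h2
    have hf0 : Tendsto (fun n => f (u n)) atTop (𝓝 0) :=
      tendsto_iff_dist_tendsto_zero.1 hp
    -- extract a subsequence along which `f ∘ u` is strictly decreasing
    have hstep : ∀ N : ℕ, ∃ m, N < m ∧ f (u m) < f (u N) := by
      intro N
      have : ∀ᶠ m in atTop, f (u m) < f (u N) :=
        (hf0.eventually (eventually_lt_nhds (hfpos (u N))))
      obtain ⟨m, hm1, hm2⟩ := ((eventually_gt_atTop N).and this).exists
      exact ⟨m, hm1, hm2⟩
    choose g hg1 hg2 using hstep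
    let φ : ℕ → ℕ := fun n => Nat.rec 0 (fun _ k => g k) n
    have hφmono : StrictMono φ := strictMono_nat_of_lt_succ fun n => hg1 (φ n)
    have hφanti : StrictAnti (fun n => f (u (φ n))) :=
      strictAnti_nat_of_succ_lt fun n => hg2 (φ n)
    set v : ℕ → X := u ∘ φ with hvdef
    have hv : CauchySeq v := hu.comp_tendsto hφmono.tendsto_atTop
    have hvdiv : ∀ a, ¬ Tendsto v atTop (𝓝 a) := fun a ha =>
      hdiv a (tendsto_nhds_of_cauchySeq_of_subseq hu hφmono.tendsto_atTop ha)
    have hvinj : Function.Injective v := by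
      intro i j hij
      by_contra hne
      rcases lt_or_gt_of_ne hne with hlt | hlt
      · exact absurd (congrArg (fun x => f x) hij) (ne_of_gt (hφanti hlt))
      · exact absurd (congrArg (fun x => f x) hij) (ne_of_lt (hφanti hlt))
    -- the two disjoint closed sets
    set A : Set X := Set.range (fun k => v (2 * k)) with hAdef
    set B : Set X := Set.range (fun k => v (2 * k + 1)) with hBdef
    have hevenmono : StrictMono (fun k => φ (2 * k)) :=
      fun a b hab => hφmono (show 2 * a < 2 * b by omega)
    have hoddmono : StrictMono (fun k => φ (2 * k + 1)) :=
      fun a b hab => hφmono (show 2 * a + 1 < 2 * b + 1 by omega)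
    have hAclosed : IsClosed A := aux_closed_range hu hdiv hevenmono
    have hBclosed : IsClosed B := aux_closed_range hu hdiv hoddmono
    have hAne : A.Nonempty := ⟨v 0, ⟨0, by norm_num⟩⟩
    have hBne : B.Nonempty := ⟨v 1, ⟨0, by norm_num⟩⟩
    have hden : ∀ x, 0 < infDist x A + infDist x B := by
      intro x
      rcases (add_nonneg (infDist_nonneg (s := A)) (infDist_nonneg (s := B))).lt_or_eq
        with h | h
      · exact h
      · exfalso
        have h1 : infDist x A = 0 := by
          have := infDist_nonneg (s := B) (x := x)
          have := infDist_nonneg (s := A) (x := x)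
          linarith
        have h2 : infDist x B = 0 := by
          have := infDist_nonneg (s := A) (x := x)
          linarith
        have hxA : x ∈ A := (hAclosed.mem_iff_infDist_zero hAne).2 h1
        have hxB : x ∈ B := (hBclosed.mem_iff_infDist_zero hBne).2 h2
        obtain ⟨i, hi⟩ := hxA
        obtain ⟨j, hj⟩ := hxB
        have := hvinj (hi.trans hj.symm)
        omega
    set F : X → ℝ := fun x => infDist x A / (infDist x A + infDist x B) with hFdef
    have hFcont : Continuous F :=
      (continuous_infDist_pt A).div
        ((continuous_infDist_pt A).add (continuous_infDist_pt B))
        fun x => (hden x).ne'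
    have hFmem : ∀ x, F x ∈ Set.Icc (0 : ℝ) 1 := by
      intro x
      constructor
      · exact div_nonneg infDist_nonneg (hden x).le
      · rw [div_le_one (hden x)]
        exact le_add_of_nonneg_right infDist_nonneg
    have hFtb : TBRegular F := by
      intro A' _
      refine TotallyBounded.subset ?_ (totallyBounded_Icc (0 : ℝ) 1)
      rintro _ ⟨x, -, rfl⟩
      exact hFmem x
    have hFA : ∀ k, F (v (2 * k)) = 0 := by
      intro k
      have : infDist (v (2 * k)) A = 0 := infDist_zero_of_mem ⟨k, rfl⟩
      rw [hFdef]
      simp [this]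
    have hFB : ∀ k, F (v (2 * k + 1)) = 1 := by
      intro k
      have hB0 : infDist (v (2 * k + 1)) B = 0 := infDist_zero_of_mem ⟨k, rfl⟩
      have hApos : 0 < infDist (v (2 * k + 1)) A := by
        rw [← hAclosed.notMem_iff_infDist_pos hAne]
        rintro ⟨j, hj⟩
        have := hvinj hj
        omega
      rw [hFdef]
      simp only [hB0, add_zero]
      exact div_self hApos.ne'
    have hcc : CauchySeq (F ∘ v) := h3 F hFcont hFtb v hv
    rw [Metric.cauchySeq_iff] at hcc
    obtain ⟨N, hN⟩ := hcc 1 one_pos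
    have := hN (2 * N) (by omega) (2 * N + 1) (by omega)
    rw [Function.comp_apply, Function.comp_apply, hFA N, hFB N] at this
    rw [Real.dist_eq] at this
    norm_num at this
  tfae_finish
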